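/- Let α be a real algebraic number of degree m and L the Liouville constant. Then for each n with 1 ≤ n ≤ m-1, w*_n(α + L) ≤ 2m²n + m - 1. -/

import Mathlib

open Polynomial Filter

/-- Primitive integer minimal polynomial of a real number. -/
noncomputable def intMin (x : ℝ) : Polynomial ℤ :=
  (IsLocalization.integerNormalization (nonZeroDivisors ℤ) (minpoly ℚ x)).primPart

/-- Height of an integer polynomial: max absolute value of its coefficients. -/
def polyHeight (P : Polynomial ℤ) : ℕ :=
  (Finset.range (P.natDegree + 1)).sup fun i => (P.coeff i).natAbs

/-- Height of an algebraic real number. -/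
noncomputable def aheight (x : ℝ) : ℕ := polyHeight (intMin x)

/-- Degree of a real number over ℚ. -/
noncomputable def adeg (x : ℝ) : ℕ := (minpoly ℚ x).natDegree

/-- Liouville constant L = ∑ 10^{-j!}, j ≥ 1. -/
noncomputable def Lconst : ℝ := ∑' j : ℕ, 1 / (10 : ℝ) ^ (Nat.factorial (j + 1))

/-- Numerator of k-th truncation of L. -/
def pk (k : ℕ) : ℤ := ∑ j ∈ Finset.range k, 10 ^ ((Nat.factorial k) - (Nat.factorial (j + 1)))

/-- Denominator of k-th truncation of L. -/
def qk (k : ℕ) : ℤ := 10 ^ (Nat.factorial k)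

/-- Set of degree-n algebraic approximants witnessing exponent w. -/
noncomputable def wSet (ξ : ℝ) (n : ℕ) (w : ℝ) : Set ℝ :=
  {γ : ℝ | IsAlgebraic ℚ γ ∧ adeg γ = n ∧ 0 < |ξ - γ| ∧
    |ξ - γ| < (aheight γ : ℝ) ^ (-w - 1)}

/-- ξ is a U_m-number: w*_m(ξ) = ∞ and w*_n(ξ) < ∞ for 1 ≤ n < m. -/
noncomputable def IsUm (ξ : ℝ) (m : ℕ) : Prop :=
  (∀ w : ℝ, (wSet ξ m w).Infinite) ∧
    ∀ n : ℕ, 1 ≤ n → n < m → ∃ w : ℝ, (wSet ξ n w).Finite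

/-- ξ is a Liouville number. -/
def IsLiouvilleReal (x : ℝ) : Prop :=
  ∀ w : ℝ, 0 < w →
    {r : ℚ | 0 < |x - (r : ℝ)| ∧ |x - (r : ℝ)| < (r.den : ℝ) ^ (-w)}.Infinite

/-- Height of a rational number: max of |numerator| and denominator. -/
def qheight (r : ℚ) : ℕ := max r.num.natAbs r.den


section AuxLemmas
open Finset IntermediateField

lemma intMin_ne_zero (x : ℝ) : intMin x ≠ 0 := Polynomial.primPart_ne_zero _

lemma integerNormalization_minpoly_ne_zero {x : ℝ} (hx : IsAlgebraic ℚ x) :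
    IsLocalization.integerNormalization (nonZeroDivisors ℤ) (minpoly ℚ x) ≠ 0 := by
  intro h
  obtain ⟨b, hb⟩ := IsLocalization.integerNormalization_map_to_map (nonZeroDivisors ℤ) (minpoly ℚ x)
  rw [h, Polynomial.map_zero] at hb
  have hb0 : (b : ℤ) ≠ 0 := nonZeroDivisors.coe_ne_zero b
  have := minpoly.ne_zero hx.isIntegral
  have : (b : ℤ) • minpoly ℚ x ≠ 0 := smul_ne_zero (by exact_mod_cast hb0) this
  exact this hb.symm

lemma natDegree_intMin {x : ℝ} (hx : IsAlgebraic ℚ x) : (intMin x).natDegree = adeg x := by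
  rw [intMin, Polynomial.natDegree_primPart]
  obtain ⟨b, hb⟩ := IsLocalization.integerNormalization_map_to_map (nonZeroDivisors ℤ) (minpoly ℚ x)
  have hinj : Function.Injective (algebraMap ℤ ℚ) := fun a b h => by exact_mod_cast h
  have h1 := Polynomial.natDegree_map_eq_of_injective hinj
    (IsLocalization.integerNormalization (nonZeroDivisors ℤ) (minpoly ℚ x))
  rw [hb] at h1
  have hb0 : ((b : ℤ) : ℚ) ≠ 0 := by exact_mod_cast nonZeroDivisors.coe_ne_zero b
  have h2 : (b : ℤ) • minpoly ℚ x = Polynomial.C ((b : ℤ) : ℚ) * minpoly ℚ x := by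
    rw [zsmul_eq_mul]
    norm_cast
  rw [← h1, h2, Polynomial.natDegree_C_mul hb0, adeg]

lemma aeval_intMin' {x : ℝ} (hx : IsAlgebraic ℚ x) {S : Type*} [Field S] [Algebra ℚ S]
    [CharZero S] {y : S} (hy : Polynomial.aeval y (minpoly ℚ x) = 0) :
    Polynomial.aeval y (intMin x) = 0 := by
  have h1 : Polynomial.aeval y
      (IsLocalization.integerNormalization (nonZeroDivisors ℤ) (minpoly ℚ x)) = 0 :=
    IsLocalization.integerNormalization_aeval_eq_zero (nonZeroDivisors ℤ) _ hy
  set p := IsLocalization.integerNormalization (nonZeroDivisors ℤ) (minpoly ℚ x) with hp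
  have h2 : p = Polynomial.C p.content * p.primPart := Polynomial.eq_C_content_mul_primPart p
  have h3 : Polynomial.aeval y p = (algebraMap ℤ S p.content) * Polynomial.aeval y p.primPart := by
    conv_lhs => rw [h2]
    simp [Polynomial.aeval_C]
  have hc : p.content ≠ 0 := fun h => integerNormalization_minpoly_ne_zero hx
    (Polynomial.content_eq_zero_iff.mp h)
  have hc' : (algebraMap ℤ S p.content) ≠ 0 := by
    simp only [algebraMap_int_eq, eq_intCast, ne_eq, Int.cast_eq_zero]
    exact hc
  rw [h1] at h3
  rcases mul_eq_zero.mp h3.symm with h | h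
  · exact absurd h hc'
  · exact h

lemma aeval_intMin {x : ℝ} (hx : IsAlgebraic ℚ x) : Polynomial.aeval x (intMin x) = 0 :=
  aeval_intMin' hx (minpoly.aeval ℚ x)

lemma coeff_natAbs_le_polyHeight (P : Polynomial ℤ) (i : ℕ) :
    (P.coeff i).natAbs ≤ polyHeight P := by
  rcases le_or_gt i P.natDegree with h | h
  · rw [polyHeight]
    exact Finset.le_sup (f := fun i => (P.coeff i).natAbs) (Finset.mem_range.mpr (Nat.lt_succ_of_le h))
  · rw [Polynomial.coeff_eq_zero_of_natDegree_lt h]; simp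

lemma coeff_abs_le_polyHeight (P : Polynomial ℤ) (i : ℕ) :
    |(P.coeff i : ℝ)| ≤ (polyHeight P : ℝ) := by
  have h : ((P.coeff i).natAbs : ℝ) ≤ (polyHeight P : ℝ) := by
    exact_mod_cast coeff_natAbs_le_polyHeight P i
  rw [Nat.cast_natAbs] at h
  exact_mod_cast h

lemma one_le_polyHeight {P : Polynomial ℤ} (hP : P ≠ 0) : 1 ≤ polyHeight P := by
  have h0 : P.leadingCoeff ≠ 0 := Polynomial.leadingCoeff_ne_zero.mpr hP
  have h1 : 1 ≤ (P.coeff P.natDegree).natAbs := Int.natAbs_pos.mpr h0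
  exact le_trans h1 (coeff_natAbs_le_polyHeight P _)

lemma norm_int_rclike {𝕜 : Type*} [RCLike 𝕜] (z : ℤ) : ‖(z : 𝕜)‖ = |(z : ℝ)| := by
  have h : ((z : ℤ) : 𝕜) = ((z : ℝ) : 𝕜) := by push_cast; ring
  rw [h, RCLike.norm_ofReal]

lemma norm_pow_sub_pow {𝕜 : Type*} [RCLike 𝕜] (x y : 𝕜) (R : ℝ) (hx : ‖x‖ ≤ R) (hy : ‖y‖ ≤ R)
    (i : ℕ) (hR : 1 ≤ R) : ‖x ^ i - y ^ i‖ ≤ i * R ^ i * ‖x - y‖ := by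
  induction i with
  | zero => simp
  | succ i ih =>
    have key : x ^ (i+1) - y ^ (i+1) = x ^ i * (x - y) + y * (x ^ i - y ^ i) := by ring
    have hR0 : (0:ℝ) ≤ R := le_trans zero_le_one hR
    have h1 : R ^ i ≤ R ^ (i+1) := by
      calc R ^ i = 1 * R ^ i := (one_mul _).symm
        _ ≤ R * R ^ i := by gcongr
        _ = R ^ (i+1) := by ring
    have h2 : R ^ i * ‖x - y‖ ≤ R ^ (i+1) * ‖x - y‖ :=
      mul_le_mul_of_nonneg_right h1 (norm_nonneg _)
    calc ‖x ^ (i+1) - y ^ (i+1)‖ ≤ ‖x ^ i * (x - y)‖ + ‖y * (x ^ i - y ^ i)‖ := by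
          rw [key]; exact norm_add_le _ _
      _ ≤ R ^ i * ‖x - y‖ + R * (i * R ^ i * ‖x - y‖) := by
          gcongr
          · rw [norm_mul, norm_pow]
            gcongr
          · rw [norm_mul]
            gcongr
      _ = R ^ i * ‖x - y‖ + i * R ^ (i+1) * ‖x - y‖ := by ring
      _ ≤ R ^ (i+1) * ‖x - y‖ + i * R ^ (i+1) * ‖x - y‖ := by gcongr
      _ = (i+1 : ℕ) * R ^ (i+1) * ‖x - y‖ := by push_cast; ring

/-- Bound on an integer-coefficient sum evaluated at a point of norm ≤ R. -/
lemma intpoly_eval_bound {𝕜 : Type*} [RCLike 𝕜] (n H : ℕ) (c : ℕ → ℤ)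
    (hc : ∀ i, |(c i : ℝ)| ≤ H) (x : 𝕜) (R : ℝ) (hR : 1 ≤ R) (hx : ‖x‖ ≤ R) :
    ‖∑ i ∈ range (n+1), (c i : 𝕜) * x ^ i‖ ≤ (n+1) * H * R ^ n := by
  have hR0 : (0:ℝ) ≤ R := le_trans zero_le_one hR
  calc ‖∑ i ∈ range (n+1), (c i : 𝕜) * x ^ i‖ ≤ ∑ i ∈ range (n+1), ‖(c i : 𝕜) * x ^ i‖ :=
        norm_sum_le _ _
    _ ≤ ∑ i ∈ range (n+1), (H : ℝ) * R ^ n := by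
        apply Finset.sum_le_sum
        intro i hi
        rw [norm_mul, norm_pow, norm_int_rclike]
        have hxi : ‖x‖ ^ i ≤ R ^ n := by
          calc ‖x‖ ^ i ≤ R ^ i := by
                apply pow_le_pow_left₀ (norm_nonneg _) hx
            _ ≤ R ^ n := pow_le_pow_right₀ hR (Finset.mem_range_succ_iff.mp hi)
        exact mul_le_mul (hc i) hxi (by positivity) (Nat.cast_nonneg H)
    _ = (n+1) * H * R ^ n := by
        rw [Finset.sum_const, Finset.card_range]
        push_cast; ring

/-- Lipschitz-type bound for integer-coefficient sums. -/
lemma intpoly_diff_bound {𝕜 : Type*} [RCLike 𝕜] (n H : ℕ) (c : ℕ → ℤ)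
    (hc : ∀ i, |(c i : ℝ)| ≤ H) (x y : 𝕜) (R : ℝ) (hR : 1 ≤ R) (hx : ‖x‖ ≤ R) (hy : ‖y‖ ≤ R) :
    ‖(∑ i ∈ range (n+1), (c i : 𝕜) * x ^ i) - ∑ i ∈ range (n+1), (c i : 𝕜) * y ^ i‖
      ≤ (n+1) * (n+1) * H * R ^ n * ‖x - y‖ := by
  have hR0 : (0:ℝ) ≤ R := le_trans zero_le_one hR
  have key : (∑ i ∈ range (n+1), (c i : 𝕜) * x ^ i) - ∑ i ∈ range (n+1), (c i : 𝕜) * y ^ i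
      = ∑ i ∈ range (n+1), (c i : 𝕜) * (x ^ i - y ^ i) := by
    rw [← Finset.sum_sub_distrib]
    congr 1; ext i; ring
  rw [key]
  calc ‖∑ i ∈ range (n+1), (c i : 𝕜) * (x ^ i - y ^ i)‖
      ≤ ∑ i ∈ range (n+1), ‖(c i : 𝕜) * (x ^ i - y ^ i)‖ := norm_sum_le _ _
    _ ≤ ∑ i ∈ range (n+1), (H : ℝ) * ((n+1) * R ^ n * ‖x - y‖) := by
        apply Finset.sum_le_sum
        intro i hi
        rw [norm_mul, norm_int_rclike]
        have h1 : ‖x ^ i - y ^ i‖ ≤ (n+1) * R ^ n * ‖x - y‖ := by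
          calc ‖x ^ i - y ^ i‖ ≤ i * R ^ i * ‖x - y‖ := norm_pow_sub_pow x y R hx hy i hR
            _ ≤ (n+1) * R ^ n * ‖x - y‖ := by
                have e1 : (i : ℝ) ≤ (n:ℝ)+1 := by
                  have := Finset.mem_range_succ_iff.mp hi
                  exact_mod_cast Nat.le_succ_of_le this
                have e2 : R ^ i ≤ R ^ n := pow_le_pow_right₀ hR (Finset.mem_range_succ_iff.mp hi)
                have e3 : (i:ℝ) * R ^ i ≤ ((n:ℝ)+1) * R ^ n :=
                  mul_le_mul e1 e2 (by positivity) (by positivity)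
                exact mul_le_mul_of_nonneg_right e3 (norm_nonneg _)
        exact mul_le_mul (hc i) h1 (norm_nonneg _) (Nat.cast_nonneg H)
    _ = (n+1) * (n+1) * H * R ^ n * ‖x - y‖ := by
        rw [Finset.sum_const, Finset.card_range]
        push_cast; ring

lemma summable_L : Summable (fun j : ℕ => 1 / (10 : ℝ) ^ (Nat.factorial (j + 1))) := by
  have hg : Summable (fun j : ℕ => (1/10 : ℝ) ^ j) :=
    summable_geometric_of_lt_one (by norm_num) (by norm_num)
  have hle : ∀ j : ℕ, 1 / (10 : ℝ) ^ (Nat.factorial (j + 1)) ≤ (1/10 : ℝ) ^ j := by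
    intro j
    rw [div_pow, one_pow]
    apply div_le_div_of_nonneg_left zero_le_one (by positivity)
    apply pow_le_pow_right₀ (by norm_num)
    calc j ≤ j + 1 := Nat.le_succ j
      _ ≤ (j+1).factorial := Nat.self_le_factorial _
  exact Summable.of_nonneg_of_le (fun j => by positivity) hle hg

lemma qk_pos (k : ℕ) : 0 < qk k := pow_pos (by norm_num) _

lemma rk_eq (k : ℕ) : (pk k : ℝ) / (qk k : ℝ) =
    ∑ j ∈ Finset.range k, 1 / (10 : ℝ) ^ (Nat.factorial (j + 1)) := by
  rw [pk, qk]
  push_cast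
  rw [Finset.sum_div]
  apply Finset.sum_congr rfl
  intro j hj
  have h1 : Nat.factorial (j+1) ≤ Nat.factorial k :=
    Nat.factorial_le (Nat.succ_le_of_lt (Finset.mem_range.mp hj))
  rw [div_eq_div_iff (by positivity) (by positivity), one_mul, ← pow_add]
  congr 1
  omega

lemma factorial_ge (k t : ℕ) : Nat.factorial (k+1) + t ≤ Nat.factorial (k+1+t) := by
  induction t with
  | zero => simp
  | succ t ih =>
    have h1 : Nat.factorial (k+1+t+1) = (k+1+t+1) * Nat.factorial (k+1+t) := rfl
    have h2 : 1 ≤ Nat.factorial (k+1) := Nat.one_le_iff_ne_zero.mpr (Nat.factorial_ne_zero _)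
    have h3 : 2 * Nat.factorial (k+1+t) ≤ (k+1+t+1) * Nat.factorial (k+1+t) :=
      Nat.mul_le_mul_right _ (by omega)
    have h4 : Nat.factorial (k+1+(t+1)) = (k+1+t+1) * Nat.factorial (k+1+t) := by
      rw [show k+1+(t+1) = (k+1+t)+1 from rfl, Nat.factorial_succ]
    omega

lemma L_sub_rk (k : ℕ) : 0 ≤ Lconst - (pk k : ℝ) / (qk k : ℝ) ∧
    Lconst - (pk k : ℝ) / (qk k : ℝ) ≤ 2 * (1 / (10:ℝ) ^ (Nat.factorial (k+1))) := by
  have hs := summable_L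
  have hsplit := Summable.sum_add_tsum_nat_add k hs
  rw [rk_eq k]
  have htail : Lconst - ∑ j ∈ Finset.range k, 1 / (10 : ℝ) ^ (Nat.factorial (j + 1))
      = ∑' t : ℕ, 1 / (10:ℝ) ^ (Nat.factorial (t + k + 1)) := by
    rw [Lconst, ← hsplit]
    ring
  constructor
  · rw [htail]
    apply tsum_nonneg
    intro t; positivity
  · rw [htail]
    have hb : ∀ t : ℕ, 1 / (10:ℝ) ^ (Nat.factorial (t + k + 1))
        ≤ (1 / (10:ℝ) ^ (Nat.factorial (k+1))) * (1/10)^t := by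
      intro t
      rw [div_pow, one_pow, div_mul_div_comm, one_mul, ← pow_add]
      apply div_le_div_of_nonneg_left zero_le_one (by positivity)
      apply pow_le_pow_right₀ (by norm_num)
      have := factorial_ge k t
      calc Nat.factorial (k+1) + t ≤ Nat.factorial (k+1+t) := this
        _ = Nat.factorial (t + k + 1) := by ring_nf
    calc ∑' t : ℕ, 1 / (10:ℝ) ^ (Nat.factorial (t + k + 1))
        ≤ ∑' t : ℕ, (1 / (10:ℝ) ^ (Nat.factorial (k+1))) * (1/10)^t := by
          apply Summable.tsum_le_tsum hb
          · apply Summable.of_nonneg_of_le (fun t => by positivity) hb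
            exact (summable_geometric_of_lt_one (by norm_num) (by norm_num)).mul_left _
          · exact (summable_geometric_of_lt_one (by norm_num) (by norm_num)).mul_left _
      _ = (1 / (10:ℝ) ^ (Nat.factorial (k+1))) * (1/(1-1/10)) := by
          rw [tsum_mul_left, tsum_geometric_of_lt_one (by norm_num) (by norm_num)]
          norm_num
      _ ≤ 2 * (1 / (10:ℝ) ^ (Nat.factorial (k+1))) := by
          rw [mul_comm]
          gcongr
          norm_num

lemma pk_nonneg (k : ℕ) : 0 ≤ pk k := by
  apply Finset.sum_nonneg; intro j hj; positivity

lemma L_lt_one : Lconst < 1 := by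
  have hb : ∀ j : ℕ, 1 / (10:ℝ) ^ (Nat.factorial (j+1)) ≤ (1/10)^(j+1) := by
    intro j
    rw [div_pow, one_pow]
    apply div_le_div_of_nonneg_left zero_le_one (by positivity)
    exact pow_le_pow_right₀ (by norm_num) (Nat.self_le_factorial _)
  calc Lconst ≤ ∑' j : ℕ, (1/10:ℝ)^(j+1) := Summable.tsum_le_tsum hb summable_L
        ((summable_geometric_of_lt_one (by norm_num) (by norm_num)).comp_injective
          (add_left_injective 1))
    _ = (1/10) * (1/(1-1/10)) := by
        have : ∀ j : ℕ, (1/10:ℝ)^(j+1) = (1/10) * (1/10)^j := fun j => by ring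
        simp_rw [this]
        rw [tsum_mul_left, tsum_geometric_of_lt_one (by norm_num) (by norm_num)]
        norm_num
    _ < 1 := by norm_num

lemma L_pos : 0 < Lconst := by
  have h0 : (0:ℝ) < 1 / (10:ℝ) ^ (Nat.factorial 1) := by norm_num
  calc (0:ℝ) < 1 / (10:ℝ) ^ (Nat.factorial (0+1)) := by norm_num [Nat.factorial]
    _ ≤ Lconst := Summable.le_tsum summable_L 0 (fun j _ => by positivity)

lemma pk_le_qk (k : ℕ) : pk k ≤ qk k := by
  have h1 : (pk k : ℝ) / (qk k : ℝ) ≤ Lconst := by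
    have := (L_sub_rk k).1; linarith
  have h2 : (pk k : ℝ) ≤ (qk k : ℝ) := by
    have hq : (0:ℝ) < (qk k : ℝ) := by exact_mod_cast qk_pos k
    rw [div_le_iff₀ hq] at h1
    calc (pk k : ℝ) ≤ Lconst * qk k := h1
      _ ≤ 1 * qk k := by gcongr; exact L_lt_one.le
      _ = qk k := one_mul _
  exact_mod_cast h2

lemma finite_poly_set (n H₀ : ℕ) :
    {P : Polynomial ℤ | P.natDegree ≤ n ∧ ∀ i, (P.coeff i).natAbs ≤ H₀}.Finite := by
  set S := {P : Polynomial ℤ | P.natDegree ≤ n ∧ ∀ i, (P.coeff i).natAbs ≤ H₀} with hS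
  apply Set.Finite.of_finite_image (f := fun P (i : Fin (n+1)) => P.coeff i)
  · apply Set.Finite.subset (Set.Finite.pi (t := fun _ : Fin (n+1) => Set.Icc (-(H₀:ℤ)) (H₀:ℤ))
      (fun _ => Set.finite_Icc _ _))
    rintro g ⟨P, hP, rfl⟩
    intro i _
    have h := hP.2 i
    simp only [Set.mem_Icc]
    omega
  · intro P hP Q hQ hfun
    ext i
    rcases le_or_gt i n with h | h
    · exact congrFun hfun ⟨i, by omega⟩
    · rw [Polynomial.coeff_eq_zero_of_natDegree_lt (lt_of_le_of_lt hP.1 h),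
        Polynomial.coeff_eq_zero_of_natDegree_lt (lt_of_le_of_lt hQ.1 h)]

lemma finite_bounded_height (n H₀ : ℕ) :
    {γ : ℝ | IsAlgebraic ℚ γ ∧ adeg γ = n ∧ aheight γ ≤ H₀}.Finite := by
  apply Set.Finite.subset
    (Set.Finite.biUnion (finite_poly_set n H₀) (fun P _ => P.rootSet_finite ℝ))
  rintro γ ⟨halg, hdeg, hht⟩
  have h1 : intMin γ ∈ {P : Polynomial ℤ | P.natDegree ≤ n ∧ ∀ i, (P.coeff i).natAbs ≤ H₀} := by
    constructor
    · rw [natDegree_intMin halg, hdeg]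
    · intro i
      exact le_trans (coeff_natAbs_le_polyHeight _ i) hht
  have h2 : γ ∈ (intMin γ).rootSet ℝ := by
    rw [Polynomial.mem_rootSet]
    exact ⟨intMin_ne_zero γ, aeval_intMin halg⟩
  exact Set.mem_biUnion h1 h2

set_option maxHeartbeats 1000000 in
lemma key_lower (α : ℝ) (hα : IsAlgebraic ℚ α) (m n : ℕ) (hm : adeg α = m) (hnm : n < m) :
    ∃ c : ℝ, 0 < c ∧ ∀ P : Polynomial ℤ, P ≠ 0 → P.natDegree = n →
      ∀ p q : ℤ, 0 < q → 0 ≤ p → p ≤ q →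
      c / ((polyHeight P : ℝ) ^ (m - 1) * (q : ℝ) ^ (n * m)) ≤
        |Polynomial.aeval (α + (p : ℝ) / (q : ℝ)) P| := by
  haveI hint : IsIntegral ℚ α := hα.isIntegral
  haveI : FiniteDimensional ℚ ℚ⟮α⟯ := IntermediateField.adjoin.finiteDimensional hint
  set K := ℚ⟮α⟯
  set a : K := AdjoinSimple.gen ℚ α with ha_def
  have ha : (a : ℝ) = α := AdjoinSimple.coe_gen ℚ α
  -- the distinguished embedding K → ℂ through ℝ
  set σ₀ : K →ₐ[ℚ] ℂ := (Complex.ofRealAm.restrictScalars ℚ).comp K.val with hσ₀def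
  have hσ₀a : σ₀ a = (α : ℂ) := by
    rw [hσ₀def]
    show ((K.val a : ℝ) : ℂ) = (α : ℂ)
    exact congrArg Complex.ofReal ha
  -- leading denominator
  set D : ℤ := (intMin α).leadingCoeff with hD_def
  have hD0 : D ≠ 0 := Polynomial.leadingCoeff_ne_zero.mpr (intMin_ne_zero α)
  have hDa : IsIntegral ℤ ((D : K) * a) := by
    have h1 : Polynomial.aeval a (intMin α) = 0 := by
      apply aeval_intMin' hα
      rw [ha_def]
      exact IntermediateField.aeval_gen_minpoly ℚ α
    have h2 := isIntegral_leadingCoeff_smul (intMin α) a h1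
    have h3 : (intMin α).leadingCoeff • a = (D : K) * a := by
      rw [← hD_def, zsmul_eq_mul]
    rwa [h3] at h2
  clear_value D
  -- bound for conjugates of a
  set M : ℝ := 1 + ∑ σ : (K →ₐ[ℚ] ℂ), ‖σ a‖ with hM_def
  have hM1 : 1 ≤ M := by
    rw [hM_def]
    have : (0:ℝ) ≤ ∑ σ : (K →ₐ[ℚ] ℂ), ‖σ a‖ :=
      Finset.sum_nonneg fun σ _ => norm_nonneg _
    linarith
  have hMσ : ∀ σ : (K →ₐ[ℚ] ℂ), ‖σ a‖ + 1 ≤ M := by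
    intro σ
    rw [hM_def]
    have : ‖σ a‖ ≤ ∑ τ : (K →ₐ[ℚ] ℂ), ‖τ a‖ :=
      Finset.single_le_sum (fun τ _ => norm_nonneg (τ a)) (Finset.mem_univ σ)
    linarith
  have hMpos : (0:ℝ) < M := lt_of_lt_of_le one_pos hM1
  clear_value M
  -- the constant
  refine ⟨(|(D:ℝ)| ^ (n*m) * ((n+1) * M ^ n) ^ (m-1))⁻¹, by positivity, ?_⟩
  intro P hP0 hPn p q hq0 hp0 hpq
  set H : ℕ := polyHeight P with hH_def
  have hH1 : (1:ℝ) ≤ H := by exact_mod_cast one_le_polyHeight hP0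
  have hcoeffs : ∀ i, |((P.coeff i : ℤ) : ℝ)| ≤ (H:ℝ) := fun i => coeff_abs_le_polyHeight P i
  clear_value H
  have hqR : (0:ℝ) < (q:ℝ) := by exact_mod_cast hq0
  set r : ℚ := (p : ℚ) / (q : ℚ) with hr_def
  have hr01 : 0 ≤ r ∧ r ≤ 1 := by
    constructor
    · apply div_nonneg (by exact_mod_cast hp0) (by exact_mod_cast hq0.le)
    · rw [hr_def, div_le_one (by exact_mod_cast hq0)]
      exact_mod_cast hpq
  have hrabs : |(r:ℝ)| ≤ 1 := by
    rw [abs_le]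
    constructor
    · have : (0:ℝ) ≤ (r:ℝ) := by exact_mod_cast hr01.1
      linarith
    · exact_mod_cast hr01.2
  have hrr : ((r : ℚ) : ℝ) = (p:ℝ)/(q:ℝ) := by
    rw [hr_def]; norm_cast
  set x : K := a + algebraMap ℚ K r with hx_def
  set A : K := Polynomial.aeval x P with hA_def
  have hxval : (K.val) x = α + (p:ℝ)/(q:ℝ) := by
    rw [hx_def, map_add]
    rw [show (K.val) a = α from ha, show (K.val) (algebraMap ℚ K r) = ((r:ℚ):ℝ) from
      eq_ratCast ((K.val : K →+* ℝ).comp (algebraMap ℚ K)) r]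
    rw [hrr]
  have hcompZ : (K.val.toRingHom).comp (algebraMap ℤ K) = algebraMap ℤ ℝ :=
    Subsingleton.elim _ _
  have hAR : (K.val) A = Polynomial.aeval (α + (p:ℝ)/(q:ℝ)) P := by
    rw [hA_def]
    have h := Polynomial.hom_eval₂ P (algebraMap ℤ K) (K.val.toRingHom) x
    rw [hcompZ] at h
    have h' : (K.val) (Polynomial.aeval x P) = Polynomial.eval₂ (algebraMap ℤ ℝ) (K.val x) P := by
      rw [Polynomial.aeval_def]
      exact h
    rw [h', hxval, Polynomial.aeval_def]
  -- A is nonzero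
  have hARring : Polynomial.aeval (α + (p:ℝ)/(q:ℝ)) P ≠ 0 := by
    intro h0
    have hmapne : P.map (algebraMap ℤ ℚ) ≠ 0 := by
      rw [Ne, Polynomial.map_eq_zero_iff (by exact fun a b h => by exact_mod_cast h)]
      exact hP0
    have heval : Polynomial.aeval (α + algebraMap ℚ ℝ r) (P.map (algebraMap ℤ ℚ)) = 0 := by
      rw [Polynomial.aeval_map_algebraMap]
      have : α + algebraMap ℚ ℝ r = α + (p:ℝ)/(q:ℝ) := by
        rw [show algebraMap ℚ ℝ r = ((r:ℚ):ℝ) from eq_ratCast _ r, hrr]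
      rw [this]
      exact h0
    have hdeg := minpoly.degree_le_of_ne_zero ℚ (α + algebraMap ℚ ℝ r) hmapne heval
    have hnd := Polynomial.natDegree_le_natDegree hdeg
    have h1 : minpoly ℚ (α + algebraMap ℚ ℝ r) = (minpoly ℚ α).comp (X - C r) :=
      minpoly.add_algebraMap α r
    have h2 : (minpoly ℚ (α + algebraMap ℚ ℝ r)).natDegree = m := by
      rw [h1, Polynomial.natDegree_comp, Polynomial.natDegree_X_sub_C, mul_one]
      exact hm
    have h3 : (P.map (algebraMap ℤ ℚ)).natDegree = n := by
      rw [Polynomial.natDegree_map_eq_of_injective (fun a b h => by exact_mod_cast h), hPn]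
    rw [h2, h3] at hnd
    omega
  have hA0 : A ≠ 0 := by
    intro h
    apply hARring
    rw [← hAR, h, map_zero]

  -- the integral element B
  set e : ℤ := D * q with he_def
  have he0 : e ≠ 0 := mul_ne_zero hD0 (ne_of_gt hq0)
  set B : K := (e : K) ^ n * A with hB_def
  have hB0 : B ≠ 0 := by
    apply mul_ne_zero _ hA0
    apply pow_ne_zero
    exact_mod_cast he0
  have hex : IsIntegral ℤ ((e : K) * x) := by
    have heq : (e : K) * x = (q : K) * ((D : K) * a) + ((D * p : ℤ) : K) := by
      rw [hx_def, he_def]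
      have hq0K : ((q:ℤ) : K) ≠ 0 := by exact_mod_cast ne_of_gt hq0
      have hralg : algebraMap ℚ K r = ((p : K)) / ((q : K)) := by
        rw [eq_ratCast (algebraMap ℚ K) r, hr_def]
        push_cast
        ring
      rw [hralg]
      push_cast
      field_simp
    rw [heq]
    apply IsIntegral.add
    · apply IsIntegral.mul _ hDa
      exact isIntegral_algebraMap (x := (q : ℤ))  -- (q:K) = algebraMap ℤ K q?
    · exact isIntegral_algebraMap (x := (D * p : ℤ))
  have hBsum : B = ∑ i ∈ range (n+1),
      ((P.coeff i * e ^ (n - i) : ℤ) : K) * ((e : K) * x) ^ i := by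
    rw [hB_def, hA_def, Polynomial.aeval_eq_sum_range, hPn, Finset.mul_sum]
    apply Finset.sum_congr rfl
    intro i hi
    have hi' : i ≤ n := Finset.mem_range_succ_iff.mp hi
    have : (e:K) ^ n = (e:K) ^ (n-i) * (e:K) ^ i := by
      rw [← pow_add]
      congr 1
      omega
    have hxp : ((e:K) * x)^i = (e:K)^i * x^i := mul_pow _ _ _
    rw [zsmul_eq_mul, hxp]
    push_cast
    conv_lhs => rw [show n = (n-i)+i from (by omega), pow_add]
    ring
  have hBint : IsIntegral ℤ B := by
    rw [hBsum]
    have : ∀ i ∈ range (n+1), IsIntegral ℤ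
        (((P.coeff i * e ^ (n - i) : ℤ) : K) * ((e : K) * x) ^ i) := by
      intro i _
      exact (isIntegral_algebraMap (x := (P.coeff i * e ^ (n-i) : ℤ))).mul (hex.pow i)
    exact IsIntegral.sum _ this
  -- the norm is a nonzero integer
  set N : ℚ := Algebra.norm ℚ B with hN_def
  have hNint : IsIntegral ℤ N := Algebra.isIntegral_norm ℚ hBint
  obtain ⟨z, hz⟩ := IsIntegrallyClosed.isIntegral_iff.mp hNint
  have hN0 : N ≠ 0 := by
    rw [hN_def, Algebra.norm_ne_zero_iff]
    exact hB0
  have hN1 : (1:ℝ) ≤ |(N:ℝ)| := by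
    have hz0 : z ≠ 0 := by
      intro h; apply hN0; rw [← hz, h]; simp
    have : (1:ℤ) ≤ |z| := Int.one_le_abs (by exact_mod_cast hz0)
    have h2 : ((|z| : ℤ) : ℝ) = |(N : ℝ)| := by
      rw [← hz]; push_cast; simp
    calc (1:ℝ) ≤ ((|z| : ℤ) : ℝ) := by exact_mod_cast this
      _ = |(N:ℝ)| := h2
  -- embeddings
  have hfr : Module.finrank ℚ K = m := by
    rw [IntermediateField.adjoin.finrank hint]; exact hm
  have hcard : Fintype.card (K →ₐ[ℚ] ℂ) = m := by rw [AlgHom.card]; exact hfr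
  have hprodEq : (algebraMap ℚ ℂ) N = ∏ σ : K →ₐ[ℚ] ℂ, σ B :=
    Algebra.norm_eq_prod_embeddings ℚ ℂ B
  have hprodnorm : ∏ σ : K →ₐ[ℚ] ℂ, ‖σ B‖ = |(N:ℝ)| := by
    rw [← norm_prod, ← hprodEq, show (algebraMap ℚ ℂ) N = (N:ℂ) from eq_ratCast _ N,
      Complex.norm_ratCast]
  have hsigmax : ∀ σ : K →ₐ[ℚ] ℂ, ‖σ x‖ ≤ M := by
    intro σ
    rw [hx_def, map_add, AlgHom.commutes,
      show (algebraMap ℚ ℂ) r = (r:ℂ) from eq_ratCast _ r]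
    calc ‖σ a + (r:ℂ)‖ ≤ ‖σ a‖ + ‖(r:ℂ)‖ := norm_add_le _ _
      _ ≤ ‖σ a‖ + 1 := by rw [Complex.norm_ratCast]; linarith [hrabs]
      _ ≤ M := hMσ σ
  have hsigmaA : ∀ σ : K →ₐ[ℚ] ℂ, σ A = ∑ i ∈ range (n+1), ((P.coeff i : ℂ)) * (σ x)^i := by
    intro σ
    rw [hA_def, Polynomial.aeval_eq_sum_range, hPn, map_sum]
    apply Finset.sum_congr rfl
    intro i _
    rw [zsmul_eq_mul, map_mul, map_pow, map_intCast]
  have hσbound : ∀ σ : K →ₐ[ℚ] ℂ, ‖σ A‖ ≤ (n+1) * H * M^n := by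
    intro σ
    rw [hsigmaA σ]
    exact intpoly_eval_bound n H (fun i => P.coeff i) hcoeffs (σ x) M hM1 (hsigmax σ)
  have hσB : ∀ σ : K →ₐ[ℚ] ℂ, ‖σ B‖ = |((e:ℤ):ℝ)|^n * ‖σ A‖ := by
    intro σ
    rw [hB_def, map_mul, map_pow, map_intCast, norm_mul, norm_pow, norm_int_rclike]
  have hσ₀A : ‖σ₀ A‖ = |Polynomial.aeval (α + (p:ℝ)/(q:ℝ)) P| := by
    have h1 : σ₀ A = ((K.val A : ℝ) : ℂ) := by
      rw [hσ₀def]; rfl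
    rw [h1, Complex.norm_real, hAR, Real.norm_eq_abs]
  -- assemble the product bound
  set AR : ℝ := |Polynomial.aeval (α + (p:ℝ)/(q:ℝ)) P| with hAR_def
  have hAR0 : 0 < AR := abs_pos.mpr hARring
  clear_value AR
  set E : ℝ := |((e:ℤ):ℝ)| with hE_def
  have hE0 : 0 < E := by
    rw [hE_def]
    exact abs_pos.mpr (by exact_mod_cast he0)
  have hEDq : E = |((D:ℤ):ℝ)| * (q:ℝ) := by
    rw [hE_def, he_def]
    push_cast
    rw [abs_mul, abs_of_pos hqR]
  clear_value E
  set T : ℝ := E^n * ((n+1) * H * M^n) with hT_def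
  have hT0 : 0 < T := by
    rw [hT_def]
    positivity
  clear_value T
  letI : DecidableEq (K →ₐ[ℚ] ℂ) := Classical.decEq _
  have hmain : 1 ≤ (E^n * AR) * T^(m-1) := by
    have h1 : ∏ σ : K →ₐ[ℚ] ℂ, ‖σ B‖ =
        ‖σ₀ B‖ * ∏ σ ∈ Finset.univ.erase σ₀, ‖σ B‖ :=
      (Finset.mul_prod_erase Finset.univ _ (Finset.mem_univ σ₀)).symm
    have h2 : ∏ σ ∈ Finset.univ.erase σ₀, ‖σ B‖ ≤ T^(m-1) := by
      have hcard' : (Finset.univ.erase σ₀).card = m - 1 := by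
        rw [Finset.card_erase_of_mem (Finset.mem_univ σ₀), Finset.card_univ, hcard]
      calc ∏ σ ∈ Finset.univ.erase σ₀, ‖σ B‖ ≤ ∏ σ ∈ Finset.univ.erase σ₀, T := by
            apply Finset.prod_le_prod (fun σ _ => norm_nonneg _)
            intro σ _
            rw [hσB σ]
            rw [hT_def]
            apply mul_le_mul_of_nonneg_left (hσbound σ) (by positivity)
        _ = T^(m-1) := by rw [Finset.prod_const, hcard']
    have h3 : ‖σ₀ B‖ = E^n * AR := by rw [hσB σ₀, hσ₀A]
    calc (1:ℝ) ≤ |(N:ℝ)| := hN1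
      _ = ∏ σ : K →ₐ[ℚ] ℂ, ‖σ B‖ := hprodnorm.symm
      _ = ‖σ₀ B‖ * ∏ σ ∈ Finset.univ.erase σ₀, ‖σ B‖ := h1
      _ ≤ (E^n * AR) * T^(m-1) := by
          rw [h3]
          apply mul_le_mul_of_nonneg_left h2 (by positivity)
  -- final algebra
  obtain ⟨m', rfl⟩ : ∃ m', m = m' + 1 := ⟨m - 1, by omega⟩
  simp only [Nat.add_sub_cancel] at hmain ⊢
  have hDr0 : (0:ℝ) < |((D:ℤ):ℝ)| := abs_pos.mpr (by exact_mod_cast hD0)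
  set Dr : ℝ := |((D:ℤ):ℝ)| with hDr_def
  set S : ℝ := ((n:ℝ)+1) * M^n with hS_def
  have hS0 : 0 < S := by rw [hS_def]; positivity
  have hT' : T = E^n * (S * H) := by rw [hT_def, hS_def]; ring
  clear_value S
  have hY : (E^n * T^m') = (Dr ^ (n*(m'+1)) * S ^ m') * ((H:ℝ)^m' * (q:ℝ)^(n*(m'+1))) := by
    rw [hT', hEDq]
    ring
  have hfin : 1 ≤ AR * (E^n * T^m') := by
    calc (1:ℝ) ≤ (E^n * AR) * T^m' := hmain
      _ = AR * (E^n * T^m') := by ring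
  have hYpos : (0:ℝ) < E^n * T^m' := by positivity
  rw [div_le_iff₀ (by positivity)]
  have hstep : (1:ℝ) / (E^n * T^m') ≤ AR := by
    rw [div_le_iff₀ hYpos]
    linarith [hfin]
  calc (Dr ^ (n*(m'+1)) * S ^ m')⁻¹
      = (1 / (E^n * T^m')) * ((H:ℝ)^m' * (q:ℝ)^(n*(m'+1))) := by
        rw [hY]
        have h1 : (0:ℝ) < Dr ^ (n*(m'+1)) * S ^ m' := by positivity
        have h2 : (0:ℝ) < (H:ℝ)^m' * (q:ℝ)^(n*(m'+1)) := by positivity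
        field_simp
      _ ≤ AR * ((H:ℝ)^m' * (q:ℝ)^(n*(m'+1))) := by
        apply mul_le_mul_of_nonneg_right hstep (by positivity)

lemma aeval_real_sum {n : ℕ} {P : Polynomial ℤ} (hPn : P.natDegree = n) (y : ℝ) :
    Polynomial.aeval y P = ∑ i ∈ range (n+1), (P.coeff i : ℝ) * y ^ i := by
  rw [Polynomial.aeval_eq_sum_range, hPn]
  apply Finset.sum_congr rfl
  intro i _
  rw [zsmul_eq_mul]

lemma aeval_diff_real {n H : ℕ} {P : Polynomial ℤ} (hPn : P.natDegree = n)
    (hc : ∀ i, |(P.coeff i : ℝ)| ≤ H) (x y R : ℝ) (hR : 1 ≤ R) (hx : |x| ≤ R) (hy : |y| ≤ R) :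
    |Polynomial.aeval x P - Polynomial.aeval y P| ≤ (n+1) * (n+1) * H * R ^ n * |x - y| := by
  rw [aeval_real_sum hPn x, aeval_real_sum hPn y]
  have := intpoly_diff_bound (𝕜 := ℝ) n H (fun i => P.coeff i) hc x y R hR
    (by rwa [Real.norm_eq_abs]) (by rwa [Real.norm_eq_abs])
  simpa [Real.norm_eq_abs] using this


set_option maxHeartbeats 1000000 in
theorem stmt13 (α : ℝ) (hα : IsAlgebraic ℚ α) (m : ℕ) (hm : adeg α = m)
    (n : ℕ) (hn1 : 1 ≤ n) (hnm : n ≤ m - 1) :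
    ∀ w : ℝ, w > 2 * (m : ℝ) ^ 2 * n + m - 1 → (wSet (α + Lconst) n w).Finite := by
  intro w hw
  -- basic inequalities on m, n
  have hm1 : 1 ≤ m := by
    by_contra h
    push_neg at h
    interval_cases m <;> omega
  have hnm' : n < m := by omega
  obtain ⟨m', rfl⟩ : ∃ m', m = m' + 1 := ⟨m - 1, by omega⟩
  obtain ⟨c₁, hc₁, hkey⟩ := key_lower α hα (m'+1) n hm hnm'
  set ξ : ℝ := α + Lconst with hξ
  clear_value ξ
  -- it suffices to bound heights
  suffices hsuff : ∃ H₀ : ℕ, ∀ γ ∈ wSet ξ n w, aheight γ ≤ H₀ by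
    obtain ⟨H₀, hH₀⟩ := hsuff
    apply Set.Finite.subset (finite_bounded_height n H₀)
    intro γ hγ
    exact ⟨hγ.1, hγ.2.1, hH₀ γ hγ⟩
  -- constants
  have hw0 : 0 < w := by
    have h1 : (0:ℝ) ≤ 2 * ((m':ℝ)+1)^2 * n := by positivity
    have h2 : (1:ℝ) ≤ ((m'+1 : ℕ):ℝ) := by exact_mod_cast Nat.one_le_iff_ne_zero.mpr (by omega)
    push_cast at hw ⊢
    nlinarith
  set R₀ : ℝ := |α| + 2 with hR₀
  have hR₀1 : 1 ≤ R₀ := by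
    have := abs_nonneg α
    rw [hR₀]; linarith
  clear_value R₀
  set C₀ : ℝ := (n+1) * (n+1) * R₀ ^ n with hC₀
  have hC₀0 : 0 < C₀ := by rw [hC₀]; positivity
  clear_value C₀
  set B₀ : ℕ := ⌈4 * C₀ / c₁⌉₊ + 1 with hB₀def
  have hB₀1 : 1 ≤ B₀ := by omega
  have hB₀ : 4 * C₀ / c₁ ≤ (B₀ : ℝ) := by
    rw [hB₀def]
    push_cast
    have := Nat.le_ceil (4 * C₀ / c₁)
    linarith
  clear_value B₀
  set nm : ℕ := n * (m'+1) with hnmdef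
  have hnm1 : 1 ≤ nm := by
    rw [hnmdef]; exact Nat.one_le_iff_ne_zero.mpr (by positivity)
  set C₃ : ℕ := 10 ^ (Nat.factorial (2*nm+2) * nm) with hC₃def
  have hC₃1 : 1 ≤ C₃ := Nat.one_le_iff_ne_zero.mpr (by positivity)
  clear_value C₃
  set c₅ : ℝ := c₁ / (2 * C₀ * (C₃ * B₀ ^ (2*nm))) with hc₅def
  have hc₅0 : 0 < c₅ := by
    rw [hc₅def]
    have h1 : (0:ℝ) < (C₃:ℝ) := by exact_mod_cast hC₃1
    have h2 : (0:ℝ) < (B₀:ℝ) := by exact_mod_cast hB₀1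
    positivity
  clear_value c₅
  set s : ℕ := (m'+1) + 2*nm*(m'+1) with hsdef
  set δ : ℝ := w + 1 - s with hδdef
  have hδ0 : 0 < δ := by
    rw [hδdef, hsdef, hnmdef]
    push_cast
    push_cast at hw
    nlinarith
  clear_value s δ
  refine ⟨⌈(1/c₅) ^ (1/δ : ℝ)⌉₊, ?_⟩
  intro γ hγ
  obtain ⟨halg, hdeg, hgpos, hglt⟩ := hγ
  set P : Polynomial ℤ := intMin γ with hPdef
  set H : ℕ := aheight γ with hHdef
  have hP0 : P ≠ 0 := intMin_ne_zero γ
  have hPn : P.natDegree = n := by rw [hPdef, natDegree_intMin halg, hdeg]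
  have hH1 : (1:ℝ) ≤ H := by exact_mod_cast one_le_polyHeight hP0
  have hHpos : (0:ℝ) < H := lt_of_lt_of_le one_pos hH1
  have hcoeffs : ∀ i, |(P.coeff i : ℝ)| ≤ (H:ℝ) := fun i => coeff_abs_le_polyHeight P i
  have haev : Polynomial.aeval γ P = 0 := by rw [hPdef]; exact aeval_intMin halg
  have hHP : H = polyHeight P := by rw [hHdef, hPdef]; rfl
  clear_value P H
  -- membership bound: |ξ - γ| < 1
  have hrpow1 : (H:ℝ) ^ (-w - 1) ≤ 1 :=
    Real.rpow_le_one_of_one_le_of_nonpos hH1 (by linarith)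
  have hgam1 : |ξ - γ| < 1 := lt_of_lt_of_le hglt hrpow1
  -- point bounds
  have hξbound : |ξ| ≤ |α| + 1 := by
    rw [hξ]
    calc |α + Lconst| ≤ |α| + |Lconst| := abs_add_le _ _
      _ ≤ |α| + 1 := by
          have h1 := L_pos
          have h2 := L_lt_one
          rw [abs_of_pos h1]; linarith
  have hγbound : |γ| ≤ R₀ := by
    have : |γ| ≤ |ξ| + |ξ - γ| := by
      have := abs_sub_abs_le_abs_sub γ ξ
      rw [abs_sub_comm γ ξ] at this
      linarith
    rw [hR₀]; linarith
  have hξR : |ξ| ≤ R₀ := by rw [hR₀]; linarith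
  -- choose k
  have hex : ∃ j : ℕ, B₀ * H ^ (m'+1) ≤
      10 ^ (Nat.factorial (j + (2*nm+2)) * (j + (2*nm+2) + 1 - nm)) := by
    refine ⟨B₀ * H ^ (m'+1), ?_⟩
    set j := B₀ * H ^ (m'+1) with hj
    have h1 : j ≤ Nat.factorial (j + (2*nm+2)) * (j + (2*nm+2) + 1 - nm) := by
      have h2 : j ≤ Nat.factorial (j + (2*nm+2)) := by
        calc j ≤ j + (2*nm+2) := Nat.le_add_right _ _
          _ ≤ Nat.factorial (j + (2*nm+2)) := Nat.self_le_factorial _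
      have h3 : 1 ≤ j + (2*nm+2) + 1 - nm := by omega
      calc j = j * 1 := (Nat.mul_one j).symm
        _ ≤ Nat.factorial (j + (2*nm+2)) * (j + (2*nm+2) + 1 - nm) := Nat.mul_le_mul h2 h3
    have hlt : j < 10 ^ (Nat.factorial (j + (2*nm+2)) * (j + (2*nm+2) + 1 - nm)) :=
      calc j < 10 ^ j := Nat.lt_pow_self (by norm_num)
        _ ≤ 10 ^ (Nat.factorial (j + (2*nm+2)) * (j + (2*nm+2) + 1 - nm)) :=
            Nat.pow_le_pow_right (by norm_num) h1
    exact hlt.le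
  set j := Nat.find hex with hjdef
  set k := j + (2*nm+2) with hkdef
  have hkmain : B₀ * H ^ (m'+1) ≤ 10 ^ (Nat.factorial k * (k + 1 - nm)) := Nat.find_spec hex
  have hk2nm : 2*nm+2 ≤ k := by rw [hkdef]; omega
  -- the q_k^{nm} bound
  have hqknm : (10:ℕ) ^ (Nat.factorial k * nm) ≤ C₃ * (B₀ * H ^ (m'+1)) ^ (2*nm) := by
    rcases Nat.eq_zero_or_pos j with hj0 | hjpos
    · have hkk : k = 2*nm+2 := by rw [hkdef, hj0]; omega
      have h1 : (10:ℕ) ^ (Nat.factorial k * nm) = C₃ := by rw [hkk, hC₃def]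
      rw [h1]
      have h2 : 1 ≤ (B₀ * H ^ (m'+1)) ^ (2*nm) := by
        apply Nat.one_le_iff_ne_zero.mpr
        have hH1' : 1 ≤ H := by exact_mod_cast hH1
        positivity
      exact Nat.le_mul_of_pos_right _ h2
    · have hmin := Nat.find_min hex (show j - 1 < j by omega)
      push_neg at hmin
      have hidx1 : j - 1 + (2*nm+2) = k - 1 := by omega
      have hidx2 : j - 1 + (2*nm+2) + 1 - nm = k - nm := by omega
      rw [hidx2, hidx1] at hmin
      -- exponent comparison
      have hfact : Nat.factorial k = k * Nat.factorial (k-1) := by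
        have : k = (k-1) + 1 := by omega
        rw [this, Nat.factorial_succ]
        simp
      have hexp : Nat.factorial k * nm ≤ (Nat.factorial (k-1) * (k - nm)) * (2*nm) := by
        rw [hfact]
        have h1 : k ≤ (k - nm) * 2 := by omega
        calc k * Nat.factorial (k-1) * nm = Nat.factorial (k-1) * (k * nm) := by ring
          _ ≤ Nat.factorial (k-1) * (((k-nm) * 2) * nm) :=
              Nat.mul_le_mul_left _ (Nat.mul_le_mul_right _ h1)
          _ = (Nat.factorial (k-1) * (k - nm)) * (2*nm) := by ring
      calc (10:ℕ) ^ (Nat.factorial k * nm)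
          ≤ 10 ^ ((Nat.factorial (k-1) * (k - nm)) * (2*nm)) :=
            Nat.pow_le_pow_right (by norm_num) hexp
        _ = (10 ^ (Nat.factorial (k-1) * (k - nm))) ^ (2*nm) := by rw [pow_mul]
        _ ≤ (B₀ * H ^ (m'+1)) ^ (2*nm) := Nat.pow_le_pow_left (le_of_lt hmin) _
        _ ≤ C₃ * (B₀ * H ^ (m'+1)) ^ (2*nm) := Nat.le_mul_of_pos_left _ (by omega)
  clear_value j
  -- real-side: notation
  set Q : ℝ := (qk k : ℝ) with hQdef
  have hQ : Q = 10 ^ (Nat.factorial k) := by rw [hQdef, qk]; push_cast; ring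
  have hQ1 : 1 ≤ Q := by
    rw [hQ]
    exact one_le_pow₀ (by norm_num : (1:ℝ) ≤ 10)
  have hQ0 : 0 < Q := lt_of_lt_of_le one_pos hQ1
  have hQpk0 : 0 ≤ (pk k : ℝ) := by exact_mod_cast pk_nonneg k
  have hQpk1 : (pk k : ℝ) ≤ Q := by rw [hQdef]; exact_mod_cast pk_le_qk k
  -- lower bound at the rational point
  set x₁ : ℝ := α + (pk k : ℝ) / Q with hx₁def
  have hlow : c₁ / ((H:ℝ) ^ m' * Q ^ nm) ≤ |Polynomial.aeval x₁ P| := by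
    have := hkey P hP0 hPn (pk k) (qk k) (qk_pos k) (pk_nonneg k) (pk_le_qk k)
    rw [hHP]
    simpa [hx₁def, hQdef, hnmdef, Nat.add_sub_cancel] using this
  have hx₁bound : |x₁| ≤ R₀ := by
    have h1 : 0 ≤ (pk k : ℝ) / Q := div_nonneg hQpk0 hQ0.le
    have h2 : (pk k : ℝ) / Q ≤ 1 := by
      rw [div_le_one hQ0]
      exact hQpk1
    rw [hx₁def, hR₀]
    calc |α + (pk k : ℝ)/Q| ≤ |α| + |(pk k : ℝ)/Q| := abs_add_le _ _
      _ ≤ |α| + 1 := by rw [abs_of_nonneg h1]; linarith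
      _ ≤ |α| + 2 := by linarith
  -- tail bound
  have htail : |x₁ - ξ| ≤ 2 / Q ^ (k+1) := by
    have h1 := L_sub_rk k
    have h2 : x₁ - ξ = -(Lconst - (pk k : ℝ)/(qk k : ℝ)) := by
      rw [hx₁def, hξ, hQdef]; ring
    have h3 : (10:ℝ) ^ (Nat.factorial (k+1)) = Q ^ (k+1) := by
      rw [hQ, ← pow_mul]
      congr 1
      rw [Nat.factorial_succ]
      ring
    rw [h2, abs_neg, abs_of_nonneg h1.1]
    calc Lconst - (pk k : ℝ)/(qk k : ℝ) ≤ 2 * (1 / (10:ℝ) ^ (Nat.factorial (k+1))) := h1.2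
      _ = 2 / Q ^ (k+1) := by rw [h3]; ring
  -- Lipschitz estimates
  have hlip1 : |Polynomial.aeval ξ P| ≤ C₀ * H * |ξ - γ| := by
    have := aeval_diff_real hPn hcoeffs ξ γ R₀ hR₀1 hξR hγbound
    rw [haev, sub_zero] at this
    calc |Polynomial.aeval ξ P| ≤ (n+1)*(n+1)*H*R₀^n*|ξ - γ| := this
      _ = C₀ * H * |ξ - γ| := by rw [hC₀]; ring
  have hlip2 : |Polynomial.aeval x₁ P - Polynomial.aeval ξ P| ≤ C₀ * H * (2 / Q ^ (k+1)) := by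
    have := aeval_diff_real hPn hcoeffs x₁ ξ R₀ hR₀1 hx₁bound hξR
    calc |Polynomial.aeval x₁ P - Polynomial.aeval ξ P|
        ≤ (n+1)*(n+1)*H*R₀^n*|x₁ - ξ| := this
      _ ≤ (n+1)*(n+1)*H*R₀^n*(2/Q^(k+1)) := by
          apply mul_le_mul_of_nonneg_left htail
          positivity
      _ = C₀ * H * (2 / Q ^ (k+1)) := by rw [hC₀]; ring
  -- the tail is at most half the main term
  have hQpow : Q ^ (k+1) = Q ^ nm * Q ^ (k+1-nm) := by
    rw [← pow_add]
    congr 1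
    omega
  have hQlow : (B₀:ℝ) * (H:ℝ) ^ (m'+1) ≤ Q ^ (k+1-nm) := by
    have h1 : Q ^ (k+1-nm) = ((10:ℝ)) ^ (Nat.factorial k * (k+1-nm)) := by
      rw [hQ, ← pow_mul]
    rw [h1]
    exact_mod_cast hkmain
  have htailhalf : C₀ * H * (2 / Q ^ (k+1)) ≤ (c₁ / 2) / ((H:ℝ) ^ m' * Q ^ nm) := by
    have hrw : C₀ * H * (2 / Q ^ (k+1)) = (2 * C₀ * H) / Q ^ (k+1) := by ring
    rw [hrw, div_le_div_iff₀ (by positivity) (by positivity), hQpow]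
    have h1 : 4 * C₀ ≤ c₁ * B₀ := by
      rw [div_le_iff₀ hc₁] at hB₀
      linarith
    have h2 : 4 * C₀ * ((H:ℝ)^(m'+1)) ≤ c₁ * (B₀ * (H:ℝ)^(m'+1)) := by
      have := mul_le_mul_of_nonneg_right h1 (le_of_lt (by positivity : (0:ℝ) < (H:ℝ)^(m'+1)))
      linarith [this]
    have h3 : 4 * C₀ * ((H:ℝ)^(m'+1)) ≤ c₁ * Q ^ (k+1-nm) := by
      calc 4 * C₀ * ((H:ℝ)^(m'+1)) ≤ c₁ * (B₀ * (H:ℝ)^(m'+1)) := h2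
        _ ≤ c₁ * Q ^ (k+1-nm) := mul_le_mul_of_nonneg_left hQlow hc₁.le
    have hpos : (0:ℝ) < Q ^ nm := by positivity
    have h4 := mul_le_mul_of_nonneg_right h3 hpos.le
    calc 2*C₀*(H:ℝ)*((H:ℝ)^m'*Q^nm) = (4*C₀*((H:ℝ)^(m'+1))*Q^nm)/2 := by
          rw [pow_succ]; ring
      _ ≤ (c₁*Q^(k+1-nm)*Q^nm)/2 := by linarith [h4]
      _ = c₁/2*(Q^nm*Q^(k+1-nm)) := by ring
  -- main lower bound for |ξ - γ|
  have hmain1 : (c₁/2) / ((H:ℝ) ^ m' * Q ^ nm) ≤ C₀ * H * |ξ - γ| := by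
    have h1 : |Polynomial.aeval x₁ P| - |Polynomial.aeval x₁ P - Polynomial.aeval ξ P|
        ≤ |Polynomial.aeval ξ P| := by
      have := abs_sub_abs_le_abs_sub (Polynomial.aeval x₁ P) (Polynomial.aeval ξ P)
      linarith [this]
    have h2 : c₁ / ((H:ℝ) ^ m' * Q ^ nm) - (c₁/2) / ((H:ℝ) ^ m' * Q ^ nm)
        = (c₁/2) / ((H:ℝ) ^ m' * Q ^ nm) := by ring
    calc (c₁/2) / ((H:ℝ) ^ m' * Q ^ nm)
        = c₁ / ((H:ℝ) ^ m' * Q ^ nm) - (c₁/2) / ((H:ℝ) ^ m' * Q ^ nm) := h2.symm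
      _ ≤ |Polynomial.aeval x₁ P| - C₀ * H * (2 / Q ^ (k+1)) := by
          have := le_trans hlip2 htailhalf
          linarith [hlow, hlip2, htailhalf]
      _ ≤ |Polynomial.aeval x₁ P| - |Polynomial.aeval x₁ P - Polynomial.aeval ξ P| := by
          linarith [hlip2]
      _ ≤ |Polynomial.aeval ξ P| := h1
      _ ≤ C₀ * H * |ξ - γ| := hlip1
  -- convert Q^nm bound to H bound
  have hQnm : Q ^ nm ≤ (C₃:ℝ) * (B₀:ℝ)^(2*nm) * (H:ℝ)^(2*nm*(m'+1)) := by
    have h1 : Q ^ nm = ((10:ℝ)) ^ (Nat.factorial k * nm) := by rw [hQ, ← pow_mul]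
    rw [h1]
    have h2 : ((10:ℕ):ℝ) ^ (Nat.factorial k * nm) ≤ ((C₃ * (B₀ * H ^ (m'+1)) ^ (2*nm) : ℕ) : ℝ) := by
      exact_mod_cast hqknm
    push_cast at h2
    calc ((10:ℝ)) ^ (Nat.factorial k * nm) ≤ (C₃:ℝ) * ((B₀:ℝ) * (H:ℝ)^(m'+1))^(2*nm) := h2
      _ = (C₃:ℝ) * (B₀:ℝ)^(2*nm) * (H:ℝ)^(2*nm*(m'+1)) := by
          rw [mul_pow, ← pow_mul]
          ring
  -- conclude c₅ / H^s ≤ |ξ - γ|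
  have hfinal : c₅ / (H:ℝ)^s ≤ |ξ - γ| := by
    have h1 : (c₁/2) / ((H:ℝ) ^ m' * Q ^ nm) ≤ C₀ * H * |ξ - γ| := hmain1
    have hgnn : 0 ≤ |ξ - γ| := abs_nonneg _
    -- |ξ - γ| ≥ (c₁/2)/(C₀ H^{m'+1} Q^{nm})
    have h2 : (c₁/2) / (C₀ * (H:ℝ)^(m'+1) * Q ^ nm) ≤ |ξ - γ| := by
      rw [div_le_iff₀ (by positivity)]
      rw [div_le_iff₀ (by positivity)] at h1
      calc c₁/2 ≤ C₀ * H * |ξ - γ| * ((H:ℝ) ^ m' * Q ^ nm) := h1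
        _ = |ξ - γ| * (C₀ * (H:ℝ)^(m'+1) * Q ^ nm) := by ring
    calc c₅ / (H:ℝ)^s ≤ (c₁/2) / (C₀ * (H:ℝ)^(m'+1) * Q ^ nm) := by
          rw [div_le_div_iff₀ (by positivity) (by positivity)]
          -- c₅ * (C₀ H^{m'+1} Q^{nm}) ≤ (c₁/2) * H^s
          rw [hc₅def]
          have hC₃0 : (0:ℝ) < (C₃:ℝ) := by exact_mod_cast hC₃1
          have hB₀0 : (0:ℝ) < (B₀:ℝ) := by exact_mod_cast hB₀1
          have hQb : Q ^ nm ≤ (C₃:ℝ) * (B₀:ℝ)^(2*nm) * (H:ℝ)^(2*nm*(m'+1)) := hQnm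
          have hHs : (H:ℝ)^s = (H:ℝ)^(m'+1) * (H:ℝ)^(2*nm*(m'+1)) := by
            rw [hsdef, pow_add]
          rw [hHs]
          have hfl : c₁ / (2 * C₀ * ((C₃:ℝ) * (B₀:ℝ) ^ (2*nm))) * (C₀ * (H:ℝ)^(m'+1) * Q ^ nm)
              ≤ c₁ / (2 * C₀ * ((C₃:ℝ) * (B₀:ℝ) ^ (2*nm))) * (C₀ * (H:ℝ)^(m'+1) *
                ((C₃:ℝ) * (B₀:ℝ)^(2*nm) * (H:ℝ)^(2*nm*(m'+1)))) := by
            apply mul_le_mul_of_nonneg_left _ (by positivity)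
            apply mul_le_mul_of_nonneg_left hQb (by positivity)
          calc c₁ / (2 * C₀ * ((C₃:ℝ) * (B₀:ℝ) ^ (2*nm))) * (C₀ * (H:ℝ)^(m'+1) * Q ^ nm)
              ≤ c₁ / (2 * C₀ * ((C₃:ℝ) * (B₀:ℝ) ^ (2*nm))) * (C₀ * (H:ℝ)^(m'+1) *
                ((C₃:ℝ) * (B₀:ℝ)^(2*nm) * (H:ℝ)^(2*nm*(m'+1)))) := hfl
            _ = c₁/2 * ((H:ℝ)^(m'+1) * (H:ℝ)^(2*nm*(m'+1))) := by
                field_simp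
      _ ≤ |ξ - γ| := h2
  -- from the wSet inequality, bound H
  have hcast : ((H:ℝ))^(s:ℕ) = (H:ℝ) ^ ((s:ℕ):ℝ) := (Real.rpow_natCast (H:ℝ) s).symm
  have hlt2 : c₅ / (H:ℝ)^s < (H:ℝ) ^ (-w-1) := lt_of_le_of_lt hfinal hglt
  have h3 : c₅ < (H:ℝ) ^ (-w-1) * (H:ℝ)^(s:ℕ) := by
    rw [div_lt_iff₀ (by positivity)] at hlt2
    linarith [hlt2]
  have h4 : (H:ℝ) ^ (-w-1) * (H:ℝ)^(s:ℕ) = (H:ℝ) ^ (-δ) := by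
    rw [hcast, ← Real.rpow_add hHpos]
    congr 1
    rw [hδdef]
    ring
  rw [h4] at h3
  have h5 : (H:ℝ) ^ (δ:ℝ) < 1/c₅ := by
    have hpow : (0:ℝ) < (H:ℝ) ^ (δ:ℝ) := Real.rpow_pos_of_pos hHpos δ
    have h6 : (H:ℝ) ^ (-δ) = ((H:ℝ) ^ (δ:ℝ))⁻¹ := by
      exact Real.rpow_neg hHpos.le δ
    rw [h6] at h3
    rw [lt_div_iff₀ hc₅0]
    have hlt3 := mul_lt_mul_of_pos_right h3 hpow
    rw [inv_mul_cancel₀ (ne_of_gt hpow)] at hlt3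
    linarith [hlt3]
  have h7 : (H:ℝ) ≤ (1/c₅) ^ (1/δ : ℝ) := by
    have h8 : ((H:ℝ) ^ (δ:ℝ)) ^ (1/δ : ℝ) ≤ (1/c₅) ^ (1/δ : ℝ) :=
      Real.rpow_le_rpow (le_of_lt (Real.rpow_pos_of_pos hHpos δ)) h5.le (by positivity)
    rwa [← Real.rpow_mul (le_of_lt hHpos), mul_one_div, div_self (ne_of_gt hδ0),
      Real.rpow_one] at h8
  calc H ≤ ⌈(1/c₅) ^ (1/δ : ℝ)⌉₊ := by
        have := Nat.le_ceil ((1/c₅) ^ (1/δ : ℝ))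
        exact_mod_cast le_trans h7 this

end AuxLemmas
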